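/- Let X be an asymptotically transitive Banach space. Then for every s ∈ (0,1) and all x, y ∈ S_X, lim_{t→s⁻} Δ_X(x,t) = lim_{t→s⁻} Δ_X(y,t); i.e., the local moduli of convexity at any two unit vectors agree except possibly at countably many ε. -/
import Mathlib


/-- The local modulus of convexity
`Δ_X(z,ε) = inf{1 − λ ≥ 0 : ∃ v, ‖v‖ ≥ ε, ‖λz ± v‖ ≤ 1}`. -/
noncomputable def localModulusOfConvexity {X : Type*} [NormedAddCommGroup X] [NormedSpace ℝ X]
    (z : X) (ε : ℝ) : ℝ :=
  sInf {d : ℝ | 0 ≤ d ∧ ∃ v : X, ε ≤ ‖v‖ ∧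
    ‖(1 - d) • z + v‖ ≤ 1 ∧ ‖(1 - d) • z - v‖ ≤ 1}

namespace LMCaux

variable {X : Type*} [NormedAddCommGroup X] [NormedSpace ℝ X]

/-- The defining set of the local modulus of convexity. -/
def S (z : X) (ε : ℝ) : Set ℝ :=
  {d : ℝ | 0 ≤ d ∧ ∃ v : X, ε ≤ ‖v‖ ∧ ‖(1 - d) • z + v‖ ≤ 1 ∧ ‖(1 - d) • z - v‖ ≤ 1}

lemma lmc_eq (z : X) (ε : ℝ) : localModulusOfConvexity z ε = sInf (S z ε) := rfl

lemma bdd (z : X) (ε : ℝ) : BddBelow (S z ε) := ⟨0, fun _ hd => hd.1⟩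

lemma one_mem (z : X) (hz : ‖z‖ = 1) {ε : ℝ} (hε : ε ≤ 1) : (1 : ℝ) ∈ S z ε := by
  refine ⟨zero_le_one, max ε 0 • z, ?_, ?_, ?_⟩
  · rw [norm_smul, hz, mul_one, Real.norm_eq_abs, abs_of_nonneg (le_max_right ε 0)]
    exact le_max_left ε 0
  · simp only [sub_self, zero_smul, zero_add, norm_smul, hz, mul_one, Real.norm_eq_abs,
      abs_of_nonneg (le_max_right ε 0)]
    exact max_le hε zero_le_one
  · simp only [sub_self, zero_smul, zero_sub, norm_neg, norm_smul, hz, mul_one,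
      Real.norm_eq_abs, abs_of_nonneg (le_max_right ε 0)]
    exact max_le hε zero_le_one

lemma lmc_nonneg (z : X) (ε : ℝ) : 0 ≤ localModulusOfConvexity z ε :=
  Real.sInf_nonneg fun _ hd => hd.1

lemma lmc_le_one (z : X) (hz : ‖z‖ = 1) {ε : ℝ} (hε : ε ≤ 1) :
    localModulusOfConvexity z ε ≤ 1 :=
  csInf_le (bdd z ε) (one_mem z hz hε)

lemma transfer (x y : X) (hy : ‖y‖ = 1) {ε t : ℝ} (hε : 0 < ε) (ht : 0 ≤ t)
    (h1 : t * (1 + ε) ^ 2 ≤ 1)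
    (T : X ≃L[ℝ] X) (hT : T x = y)
    (hN : ‖(T : X →L[ℝ] X)‖ ≤ 1 + ε) (hN' : ‖(T.symm : X →L[ℝ] X)‖ ≤ 1 + ε) :
    localModulusOfConvexity x t ≤ localModulusOfConvexity y (t * (1 + ε) ^ 2) + ε := by
  have hεpos : (0 : ℝ) < 1 + ε := by linarith
  rw [lmc_eq, lmc_eq]
  have hne : (S y (t * (1 + ε) ^ 2)).Nonempty := ⟨1, one_mem y hy h1⟩
  refine le_of_forall_pos_le_add fun δ hδ => ?_
  obtain ⟨d, hdS, hdlt⟩ := Real.lt_sInf_add_pos hne hδ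
  set d₀ := min d 1 with hd₀
  have hd₀S : d₀ ∈ S y (t * (1 + ε) ^ 2) := by
    rcases le_total d 1 with h | h
    · simpa [hd₀, min_eq_left h] using hdS
    · simpa [hd₀, min_eq_right h] using one_mem y hy h1
  have hd₀lt : d₀ < sInf (S y (t * (1 + ε) ^ 2)) + δ :=
    lt_of_le_of_lt (min_le_left _ _) hdlt
  have hd₀le1 : d₀ ≤ 1 := min_le_right _ _
  obtain ⟨hd₀0, v, hv, hvp, hvm⟩ := hd₀S
  set d' := 1 - (1 - d₀) / (1 + ε) with hd'
  have hx' : T.symm y = x := by rw [← hT]; exact T.symm_apply_apply x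
  have h1d : 1 - d' = (1 + ε)⁻¹ * (1 - d₀) := by
    rw [hd']; field_simp; ring
  have hTv : ‖v‖ ≤ (1 + ε) * ‖T.symm v‖ := by
    have := (T : X →L[ℝ] X).le_of_opNorm_le hN (T.symm v)
    simpa [ContinuousLinearEquiv.apply_symm_apply] using this
  have hTsub : ∀ z : X, ‖T.symm z‖ ≤ (1 + ε) * ‖z‖ := fun z =>
    (T.symm : X →L[ℝ] X).le_of_opNorm_le hN' z
  have key : d' ∈ S x t := by
    refine ⟨?_, (1 + ε)⁻¹ • T.symm v, ?_, ?_, ?_⟩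
    · have h2 : (1 - d₀) / (1 + ε) ≤ 1 := by
        rw [div_le_one hεpos]; linarith
      rw [hd']; linarith
    · rw [norm_smul, Real.norm_eq_abs, abs_of_pos (inv_pos.mpr hεpos),
        le_inv_mul_iff₀ hεpos]
      nlinarith [norm_nonneg (T.symm v), norm_nonneg v]
    · have heq : (1 - d') • x + (1 + ε)⁻¹ • T.symm v
          = (1 + ε)⁻¹ • (T.symm ((1 - d₀) • y + v)) := by
        rw [map_add, map_smul, hx', smul_add, smul_smul, h1d]
      rw [heq, norm_smul, Real.norm_eq_abs, abs_of_pos (inv_pos.mpr hεpos)]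
      calc (1 + ε)⁻¹ * ‖T.symm ((1 - d₀) • y + v)‖
          ≤ (1 + ε)⁻¹ * ((1 + ε) * ‖(1 - d₀) • y + v‖) := by
            exact mul_le_mul_of_nonneg_left (hTsub _) (inv_pos.mpr hεpos).le
        _ = ‖(1 - d₀) • y + v‖ := by field_simp
        _ ≤ 1 := hvp
    · have heq : (1 - d') • x - (1 + ε)⁻¹ • T.symm v
          = (1 + ε)⁻¹ • (T.symm ((1 - d₀) • y - v)) := by
        rw [map_sub, map_smul, hx', smul_sub, smul_smul, h1d]
      rw [heq, norm_smul, Real.norm_eq_abs, abs_of_pos (inv_pos.mpr hεpos)]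
      calc (1 + ε)⁻¹ * ‖T.symm ((1 - d₀) • y - v)‖
          ≤ (1 + ε)⁻¹ * ((1 + ε) * ‖(1 - d₀) • y - v‖) := by
            exact mul_le_mul_of_nonneg_left (hTsub _) (inv_pos.mpr hεpos).le
        _ = ‖(1 - d₀) • y - v‖ := by field_simp
        _ ≤ 1 := hvm
  have h3 : sInf (S x t) ≤ d' := csInf_le (bdd x t) key
  have h4 : d' ≤ d₀ + ε := by
    have h : 1 - (d₀ + ε) ≤ (1 - d₀) / (1 + ε) := by
      rw [le_div_iff₀ hεpos]; nlinarith
    rw [hd']; linarith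
  linarith

end LMCaux

open LMCaux in
/-- The left limit at `s` of the non-decreasing map `t ↦ Δ_X(x,t)` is the same for all
unit vectors `x`, when `X` is asymptotically transitive. -/
theorem stmt_12 {X : Type*} [NormedAddCommGroup X] [NormedSpace ℝ X] [CompleteSpace X]
    (hAT : ∀ x y : X, ‖x‖ = 1 → ‖y‖ = 1 → ∀ ε > 0, ∃ T : X ≃L[ℝ] X,
      T x = y ∧ ‖(T : X →L[ℝ] X)‖ ≤ 1 + ε ∧ ‖(T.symm : X →L[ℝ] X)‖ ≤ 1 + ε) :
    ∀ s : ℝ, 0 < s → s < 1 → ∀ x y : X, ‖x‖ = 1 → ‖y‖ = 1 →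
      sSup (localModulusOfConvexity x '' Set.Ico 0 s) =
        sSup (localModulusOfConvexity y '' Set.Ico 0 s) := by
  intro s hs0 hs1
  -- it suffices to prove the ≤ direction for all pairs
  suffices H : ∀ x y : X, ‖x‖ = 1 → ‖y‖ = 1 →
      sSup (localModulusOfConvexity x '' Set.Ico 0 s) ≤
        sSup (localModulusOfConvexity y '' Set.Ico 0 s) by
    intro x y hx hy
    exact le_antisymm (H x y hx hy) (H y x hy hx)
  intro x y hx hy
  have hbddy : BddAbove (localModulusOfConvexity y '' Set.Ico 0 s) := by
    refine ⟨1, ?_⟩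
    rintro _ ⟨u, hu, rfl⟩
    exact lmc_le_one y hy (le_of_lt (lt_trans hu.2 hs1))
  have hSupy_nonneg : 0 ≤ sSup (localModulusOfConvexity y '' Set.Ico 0 s) := by
    have h0 : localModulusOfConvexity y 0 ∈ localModulusOfConvexity y '' Set.Ico 0 s :=
      ⟨0, ⟨le_refl 0, hs0⟩, rfl⟩
    exact le_trans (lmc_nonneg y 0) (le_csSup hbddy h0)
  apply Real.sSup_le _ hSupy_nonneg
  rintro _ ⟨t, ⟨ht0, hts⟩, rfl⟩
  apply le_of_forall_pos_le_add
  intro η hη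
  set ε := min η (min 1 ((s - t) / (6 * s))) with hεdef
  have hεpos : 0 < ε :=
    lt_min hη (lt_min one_pos (div_pos (by linarith) (by linarith)))
  have hε1 : ε ≤ 1 := le_trans (min_le_right _ _) (min_le_left _ _)
  have hεs : ε ≤ (s - t) / (6 * s) := le_trans (min_le_right _ _) (min_le_right _ _)
  have hεη : ε ≤ η := min_le_left _ _
  have h6 : ε * (6 * s) ≤ s - t := (le_div_iff₀ (by linarith)).mp hεs
  have hlt : t * (1 + ε) ^ 2 < s := by
    nlinarith [mul_nonneg (mul_nonneg ht0 hεpos.le) (by linarith : (0:ℝ) ≤ 1 - ε),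
      mul_nonneg (by linarith : (0:ℝ) ≤ s - t) hεpos.le, mul_nonneg ht0 hεpos.le]
  obtain ⟨T, hT, hN, hN'⟩ := hAT x y hx hy ε hεpos
  have h2 := transfer x y hy hεpos ht0 (le_of_lt (lt_trans hlt hs1)) T hT hN hN'
  have h3 : localModulusOfConvexity y (t * (1 + ε) ^ 2) ≤
      sSup (localModulusOfConvexity y '' Set.Ico 0 s) :=
    le_csSup hbddy ⟨t * (1 + ε) ^ 2, ⟨by positivity, hlt⟩, rfl⟩
  linarith
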